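/- If k+1 is odd (k even) and w : Fin (n+1) → Fin (k+1) is a surjective word, then the rational parity P(w) is invariant under cyclic shift of the word: P(w ∘ τₙ) = P(w), where τₙ(i) = (i-1) mod (n+1). -/

import Mathlib

/-- Sign of a section: `(-1)^(number of inversions)`. -/
def secSign {N K : ℕ} (s : Fin K → Fin N) : ℤ :=
  (-1) ^ (Finset.univ.filter
    (fun p : Fin K × Fin K => p.1 < p.2 ∧ s p.2 < s p.1)).card

/-- Proper subwords (sections) of a word. -/
def wordSections {N K : ℕ} (w : Fin N → Fin K) : Finset (Fin K → Fin N) :=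
  Finset.univ.filter fun s => ∀ j, w (s j) = j

/-- Rational parity of a word: average sign of its proper subwords. -/
def wordParity {N K : ℕ} (w : Fin N → Fin K) : ℚ :=
  (∑ s ∈ wordSections w, (secSign s : ℚ)) / ((wordSections w).card : ℚ)

lemma aux_sub_one_lt_sub_one {n : ℕ} {x y : Fin (n+1)} (hx : x ≠ 0) (hy : y ≠ 0) :
    x - 1 < y - 1 ↔ x < y := by
  have hx' : x.val ≠ 0 := fun h => hx (Fin.ext (by simp [h]))
  have hy' : y.val ≠ 0 := fun h => hy (Fin.ext (by simp [h]))
  rw [Fin.lt_iff_val_lt_val, Fin.lt_iff_val_lt_val, Fin.coe_sub_one, Fin.coe_sub_one,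
    if_neg hx, if_neg hy]
  omega

lemma aux_neg_one_pow_eq_of_zmod {a b : ℕ} (h : (a : ZMod 2) = b) :
    ((-1 : ℤ) ^ a = (-1) ^ b) := by
  have h2 : a % 2 = b % 2 := (ZMod.natCast_eq_natCast_iff a b 2).mp h
  rcases Nat.even_or_odd a with ha | ha
  · have hb : Even b := by rw [Nat.even_iff] at *; omega
    rw [ha.neg_one_pow, hb.neg_one_pow]
  · have hb : Odd b := by rw [Nat.odd_iff] at *; omega
    rw [ha.neg_one_pow, hb.neg_one_pow]

/-- Key sign lemma: shifting the values of an injective section by the cycle `x ↦ x - 1`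
preserves the sign when the alphabet size `k+1` is odd. -/
lemma secSign_shift {n k : ℕ} (hk : Even k) (t : Fin (k+1) → Fin (n+1))
    (ht : Function.Injective t) :
    secSign (fun j => t j - 1) = secSign t := by
  unfold secSign
  by_cases h0 : ∀ j, t j ≠ 0
  · have heq : (Finset.univ.filter
        (fun p : Fin (k+1) × Fin (k+1) =>
          p.1 < p.2 ∧ (fun j => t j - 1) p.2 < (fun j => t j - 1) p.1)) =
        Finset.univ.filter (fun p : Fin (k+1) × Fin (k+1) => p.1 < p.2 ∧ t p.2 < t p.1) := by
      apply Finset.filter_congr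
      intro p _
      dsimp only
      rw [aux_sub_one_lt_sub_one (h0 p.2) (h0 p.1)]
    rw [heq]
  · push_neg at h0
    obtain ⟨j₀, hj₀⟩ := h0
    have hne : ∀ j, j ≠ j₀ → t j ≠ 0 := by
      intro j hj h
      exact hj (ht (h.trans hj₀.symm))
    have hmax : ∀ j, j ≠ j₀ → t j - 1 < t j₀ - 1 := by
      intro j hj
      have h1 : t j ≠ 0 := hne j hj
      have h1' : (t j).val ≠ 0 := fun h => h1 (Fin.ext (by simp [h]))
      have h2 : (t j).val < n + 1 := (t j).isLt
      rw [Fin.lt_iff_val_lt_val, Fin.coe_sub_one, Fin.coe_sub_one, if_neg h1, if_pos hj₀]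
      omega
    have hmin : ∀ j, j ≠ j₀ → t j₀ < t j := by
      intro j hj
      rw [hj₀]
      exact Fin.pos_iff_ne_zero.mpr (hne j hj)
    apply aux_neg_one_pow_eq_of_zmod
    rw [Finset.card_filter, Finset.card_filter, Nat.cast_sum, Nat.cast_sum]
    simp only [Nat.cast_ite, Nat.cast_one, Nat.cast_zero]
    rw [← sub_eq_zero, ← Finset.sum_sub_distrib, Fintype.sum_prod_type]
    have key : ∀ i j : Fin (k+1),
        ((if i < j ∧ t j - 1 < t i - 1 then (1 : ZMod 2) else 0) -
         (if i < j ∧ t j < t i then 1 else 0)) =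
        ((if i = j₀ then (if j₀ < j then 1 else 0) else 0) +
         (if j = j₀ then (if i ≠ j₀ then (if i < j₀ then 1 else 0) else 0) else 0)) := by
      intro i j
      by_cases hi : i = j₀
      · subst hi
        have e2 : ¬ (i < j ∧ t j < t i) := by
          rintro ⟨-, h⟩
          rw [hj₀] at h
          exact Fin.not_lt_zero _ h
        rw [if_neg e2, if_pos rfl]
        have e3 : (if j = i then (if i ≠ i then (if i < i then (1 : ZMod 2) else 0) else 0) else 0)
            = 0 := by
          split <;> simp
        rw [e3, add_zero, sub_zero]
        by_cases hj : i < j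
        · have hji : j ≠ i := fun h => absurd (h ▸ hj) (lt_irrefl _)
          rw [if_pos ⟨hj, hmax j hji⟩, if_pos hj]
        · rw [if_neg (fun h => hj h.1), if_neg hj]
      · by_cases hj : j = j₀
        · have e1 : ¬ (i < j ∧ t j - 1 < t i - 1) := by
            rintro ⟨-, h⟩
            rw [hj] at h
            exact absurd (hmax i hi) (asymm h)
          rw [if_neg e1, if_neg hi, if_pos hj, if_pos (show i ≠ j₀ from hi), zero_sub, zero_add]
          by_cases hij : i < j
          · rw [if_pos ⟨hij, by rw [hj]; exact hmin i hi⟩, if_pos (show i < j₀ by rw [← hj]; exact hij)]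
            decide
          · rw [if_neg (fun h => hij h.1), if_neg (fun h => hij (by rw [hj]; exact h))]
            decide
        · rw [if_neg (fun h : i = j₀ => hi h), if_neg (fun h : j = j₀ => hj h)]
          simp only [aux_sub_one_lt_sub_one (hne j hj) (hne i hi)]
          ring
    dsimp only
    simp only [key]
    simp only [Finset.sum_add_distrib]
    have s1 : (∑ i : Fin (k+1), ∑ j : Fin (k+1),
        (if i = j₀ then (if j₀ < j then (1 : ZMod 2) else 0) else 0)) =
        ((Finset.univ.filter (fun j : Fin (k+1) => j₀ < j)).card : ZMod 2) := by
      have pull : ∀ i : Fin (k+1), (∑ j : Fin (k+1),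
          (if i = j₀ then (if j₀ < j then (1 : ZMod 2) else 0) else 0)) =
          (if i = j₀ then ∑ j : Fin (k+1), (if j₀ < j then (1 : ZMod 2) else 0) else 0) := by
        intro i
        by_cases h : i = j₀ <;> simp [h]
      simp only [pull]
      rw [Finset.sum_ite_eq' Finset.univ j₀
        (fun _ => ∑ j : Fin (k+1), (if j₀ < j then (1 : ZMod 2) else 0)),
        if_pos (Finset.mem_univ _)]
      exact Finset.sum_boole _ _
    have s2 : (∑ i : Fin (k+1), ∑ j : Fin (k+1),
        (if j = j₀ then (if i ≠ j₀ then (if i < j₀ then (1 : ZMod 2) else 0) else 0) else 0)) =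
        ((Finset.univ.filter (fun i : Fin (k+1) => i < j₀)).card : ZMod 2) := by
      have inner : ∀ i : Fin (k+1), (∑ j : Fin (k+1),
          (if j = j₀ then (if i ≠ j₀ then (if i < j₀ then (1 : ZMod 2) else 0) else 0) else 0)) =
          (if i < j₀ then (1 : ZMod 2) else 0) := by
        intro i
        rw [Finset.sum_ite_eq' Finset.univ j₀
          (fun _ => (if i ≠ j₀ then (if i < j₀ then (1 : ZMod 2) else 0) else 0)),
          if_pos (Finset.mem_univ _)]
        by_cases hi : i = j₀
        · subst hi; simp
        · rw [if_pos hi]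
      simp only [inner]
      exact Finset.sum_boole _ _
    rw [s1, s2]
    have hcard : (Finset.univ.filter (fun j : Fin (k+1) => j₀ < j)).card +
        (Finset.univ.filter (fun i : Fin (k+1) => i < j₀)).card = k := by
      have h1 := Finset.card_filter_add_card_filter_not
        (s := (Finset.univ : Finset (Fin (k+1)))) (p := fun j => j₀ < j)
      have h2 : Finset.univ.filter (fun j : Fin (k+1) => ¬ j₀ < j) =
          insert j₀ (Finset.univ.filter (fun j => j < j₀)) := by
        ext j
        simp only [Finset.mem_filter, Finset.mem_univ, true_and, Finset.mem_insert, not_lt]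
        constructor
        · intro h
          rcases lt_or_eq_of_le h with h | h
          · exact Or.inr h
          · exact Or.inl h
        · rintro (rfl | h)
          · exact le_refl _
          · exact le_of_lt h
      rw [h2, Finset.card_insert_of_notMem (by simp)] at h1
      simp only [Finset.card_univ, Fintype.card_fin] at h1
      omega
    rw [← Nat.cast_add, hcard]
    obtain ⟨m, rfl⟩ := hk
    have : ((m + m : ℕ) : ZMod 2) = 2 * (m : ZMod 2) := by push_cast; ring
    rw [this]
    have h2 : (2 : ZMod 2) = 0 := rfl
    rw [h2, zero_mul]

/-- If the alphabet has odd size (`k` even), the rational parity of a surjective word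
is invariant under the cyclic shift `τₙ i = i - 1` of the word. -/
theorem wordParity_cyclicShift_invariant (n k : ℕ) (hk : Even k)
    (w : Fin (n + 1) → Fin (k + 1)) (hw : Function.Surjective w) :
    wordParity (fun i => w (i - 1)) = wordParity w := by
  classical
  set w' : Fin (n + 1) → Fin (k + 1) := fun i => w (i - 1) with hw'
  set σ : Fin (n + 1) ≃ Fin (n + 1) := Equiv.subRight (1 : Fin (n + 1)) with hσ
  set e : (Fin (k + 1) → Fin (n + 1)) ≃ (Fin (k + 1) → Fin (n + 1)) :=
    Equiv.arrowCongr (Equiv.refl _) σ with he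
  have happ : ∀ s : Fin (k + 1) → Fin (n + 1), ∀ j, e s j = s j - 1 := by
    intro s j
    simp [he, hσ, Equiv.arrowCongr, Equiv.subRight]
  have hsymm : ∀ t : Fin (k + 1) → Fin (n + 1), ∀ j, e.symm t j = t j + 1 := by
    intro t j
    simp [he, hσ, Equiv.arrowCongr, Equiv.subRight, sub_neg_eq_add]
  have hsec : wordSections w = (wordSections w').map e.toEmbedding := by
    ext t
    rw [Finset.mem_map_equiv]
    simp only [wordSections, Finset.mem_filter, Finset.mem_univ, true_and]
    constructor
    · intro h j
      rw [hw', hsymm]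
      simp only [add_sub_cancel_right]
      exact h j
    · intro h j
      have := h j
      rw [hw', hsymm] at this
      simpa using this
  unfold wordParity
  rw [hsec, Finset.card_map, Finset.sum_map]
  congr 1
  apply Finset.sum_congr rfl
  intro s hs
  simp only [wordSections, Finset.mem_filter, Finset.mem_univ, true_and] at hs
  have hinj : Function.Injective s := by
    intro a b hab
    have ha := hs a
    have hb := hs b
    rw [hab] at ha
    rw [hb] at ha
    exact ha.symm
  have : secSign (e.toEmbedding s) = secSign s := by
    have h1 : (e.toEmbedding s : Fin (k+1) → Fin (n+1)) = fun j => s j - 1 := by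
      funext j
      exact happ s j
    rw [h1]
    exact secSign_shift hk s hinj
  rw [this]
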